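/- Let u(x,y) = |x|^{4/3} − |y|^{4/3} on ℝ², which is of class C¹. Consider the curves γ₁(t) = ((1 − (8/9)t)^{3/2}, 0) for t ∈ [0, 9/8), γ₂(t) = (0, (1 + (8/9)t)^{3/2}) for t ≥ 0, and γ₃(t) = ((1 − (8/9)t)^{3/2}, ((8/9)t)^{3/2}) for t ∈ [0, 9/8]. Then: (a) each γᵢ satisfies the gradient dynamics γᵢ'(t) = −∇u(γᵢ(t)) on its domain; (b) |∇u(γ₁(t))| = (4/3)√(1 − (8/9)t), which is strictly decreasing in t, and |∇u(γ₂(t))| = (4/3)√(1 + (8/9)t), which is strictly increasing in t; (c) γ₁ and γ₃ are two distinct solutions of the same initial value problem γ' = −∇u(γ), γ(0) = (1,0), and |∇u(γ₃(t))| = 4/3 is constant in t. -/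

import Mathlib

open Set

/-- The gradient of `u(x,y) = |x|^{4/3} - |y|^{4/3}`. -/
noncomputable def gradU18 (p : ℝ × ℝ) : ℝ × ℝ :=
  ((4/3) * |p.1| ^ ((1:ℝ)/3) * Real.sign p.1,
    -((4/3) * |p.2| ^ ((1:ℝ)/3) * Real.sign p.2))

/-- First trajectory of the gradient dynamics. -/
noncomputable def gamma1 (t : ℝ) : ℝ × ℝ := ((1 - (8/9) * t) ^ ((3:ℝ)/2), 0)

/-- Second trajectory of the gradient dynamics. -/
noncomputable def gamma2 (t : ℝ) : ℝ × ℝ := (0, (1 + (8/9) * t) ^ ((3:ℝ)/2))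

/-- Third trajectory of the gradient dynamics, starting at `(1,0)` like `gamma1`. -/
noncomputable def gamma3 (t : ℝ) : ℝ × ℝ :=
  ((1 - (8/9) * t) ^ ((3:ℝ)/2), ((8/9) * t) ^ ((3:ℝ)/2))

lemma aux_deriv18 (c a t : ℝ) :
    HasDerivAt (fun t : ℝ => (c + a * t) ^ ((3:ℝ)/2))
      ((3/2) * (c + a * t) ^ ((1:ℝ)/2) * a) t := by
  have h1 : HasDerivAt (fun t : ℝ => c + a * t) a t := by
    simpa using ((hasDerivAt_id t).const_mul a).const_add c
  have h2 := (Real.hasDerivAt_rpow_const (p := (3:ℝ)/2) (x := c + a * t)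
      (Or.inr (by norm_num))).comp t h1
  rw [show (1:ℝ)/2 = 3/2 - 1 by norm_num]
  exact h2

lemma aux_grad18 (s : ℝ) (hs : 0 ≤ s) :
    (4/3) * |s ^ ((3:ℝ)/2)| ^ ((1:ℝ)/3) * Real.sign (s ^ ((3:ℝ)/2))
      = (4/3) * s ^ ((1:ℝ)/2) := by
  rcases hs.eq_or_lt with h | h
  · rw [← h, Real.zero_rpow (by norm_num), Real.zero_rpow (by norm_num)]
    simp
  · have hx : (0:ℝ) < s ^ ((3:ℝ)/2) := Real.rpow_pos_of_pos h _
    rw [Real.sign_of_pos hx, abs_of_pos hx, ← Real.rpow_mul hs]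
    norm_num

lemma aux_sq18 (s : ℝ) (hs : 0 ≤ s) : (s ^ ((1:ℝ)/2)) ^ 2 = s := by
  rw [← Real.sqrt_eq_rpow, Real.sq_sqrt hs]

lemma aux_d1 (t : ℝ) :
    HasDerivAt (fun t : ℝ => (1 - (8/9) * t) ^ ((3:ℝ)/2))
      (-(4/3 * (1 - (8/9) * t) ^ ((1:ℝ)/2))) t := by
  have h := aux_deriv18 1 (-(8/9)) t
  have hfun : (fun s : ℝ => ((1:ℝ) + (-(8/9)) * s) ^ ((3:ℝ)/2))
      = fun s : ℝ => (1 - (8/9) * s) ^ ((3:ℝ)/2) := by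
    funext s; congr 1; ring
  rw [hfun, show (1:ℝ) + (-(8/9)) * t = 1 - (8/9) * t from by ring] at h
  convert h using 1; ring

lemma aux_d2 (t : ℝ) :
    HasDerivAt (fun t : ℝ => (1 + (8/9) * t) ^ ((3:ℝ)/2))
      (4/3 * (1 + (8/9) * t) ^ ((1:ℝ)/2)) t := by
  have h := aux_deriv18 1 (8/9) t
  convert h using 1; ring

lemma aux_d3 (t : ℝ) :
    HasDerivAt (fun t : ℝ => ((8/9) * t) ^ ((3:ℝ)/2))
      (4/3 * ((8/9) * t) ^ ((1:ℝ)/2)) t := by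
  have h := aux_deriv18 0 (8/9) t
  have hfun : (fun s : ℝ => ((0:ℝ) + (8/9) * s) ^ ((3:ℝ)/2))
      = fun s : ℝ => ((8/9) * s) ^ ((3:ℝ)/2) := by
    funext s; congr 1; ring
  rw [hfun, show (0:ℝ) + (8/9) * t = (8/9) * t from by ring] at h
  convert h using 1; ring


lemma grad_g1 (t : ℝ) (hs : 0 ≤ 1 - (8/9) * t) :
    gradU18 (gamma1 t) = ((4/3) * (1 - (8/9) * t) ^ ((1:ℝ)/2), 0) := by
  unfold gradU18 gamma1
  simp only [Real.sign_zero, mul_zero, neg_zero]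
  rw [aux_grad18 _ hs]

lemma grad_g2 (t : ℝ) (hs : 0 ≤ 1 + (8/9) * t) :
    gradU18 (gamma2 t) = (0, -((4/3) * (1 + (8/9) * t) ^ ((1:ℝ)/2))) := by
  unfold gradU18 gamma2
  simp only [Real.sign_zero, mul_zero, abs_zero]
  rw [aux_grad18 _ hs]

lemma grad_g3 (t : ℝ) (hs : 0 ≤ 1 - (8/9) * t) (hr : 0 ≤ (8/9) * t) :
    gradU18 (gamma3 t) = ((4/3) * (1 - (8/9) * t) ^ ((1:ℝ)/2),
      -((4/3) * ((8/9) * t) ^ ((1:ℝ)/2))) := by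
  unfold gradU18 gamma3
  rw [aux_grad18 _ hs, aux_grad18 _ hr]

/-- the explicit curves `γ₁, γ₂, γ₃` solve the gradient dynamics
`γ' = -∇u(γ)` for `u(x,y) = |x|^{4/3} - |y|^{4/3}`; the (Euclidean) norm of
`∇u` along `γ₁` is `(4/3)√(1-(8/9)t)` (strictly decreasing), along `γ₂` it is
`(4/3)√(1+(8/9)t)` (strictly increasing); `γ₁` and `γ₃` are distinct solutions of
the same initial value problem at `(1,0)`, and `|∇u(γ₃(t))| = 4/3` is constant. -/
theorem stmt_18 :
    -- (a) the three curves solve the gradient dynamics on their domains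
    (∀ t ∈ Ico (0:ℝ) (9/8),
      HasDerivWithinAt gamma1 (-(gradU18 (gamma1 t))) (Ico (0:ℝ) (9/8)) t) ∧
    (∀ t ∈ Ici (0:ℝ),
      HasDerivWithinAt gamma2 (-(gradU18 (gamma2 t))) (Ici (0:ℝ)) t) ∧
    (∀ t ∈ Icc (0:ℝ) (9/8),
      HasDerivWithinAt gamma3 (-(gradU18 (gamma3 t))) (Icc (0:ℝ) (9/8)) t) ∧
    -- (b) the norm of the gradient along `γ₁` and `γ₂`
    (∀ t ∈ Ico (0:ℝ) (9/8),
      Real.sqrt ((gradU18 (gamma1 t)).1 ^ 2 + (gradU18 (gamma1 t)).2 ^ 2)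
        = (4/3) * Real.sqrt (1 - (8/9) * t)) ∧
    StrictAntiOn (fun t : ℝ => (4/3) * Real.sqrt (1 - (8/9) * t)) (Ico (0:ℝ) (9/8)) ∧
    (∀ t ∈ Ici (0:ℝ),
      Real.sqrt ((gradU18 (gamma2 t)).1 ^ 2 + (gradU18 (gamma2 t)).2 ^ 2)
        = (4/3) * Real.sqrt (1 + (8/9) * t)) ∧
    StrictMonoOn (fun t : ℝ => (4/3) * Real.sqrt (1 + (8/9) * t)) (Ici (0:ℝ)) ∧
    -- (c) `γ₁` and `γ₃` solve the same initial value problem but differ, and the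
    -- norm of the gradient along `γ₃` is constant
    gamma1 0 = (1, 0) ∧ gamma3 0 = (1, 0) ∧
    (∃ t ∈ Icc (0:ℝ) (9/8), gamma1 t ≠ gamma3 t) ∧
    (∀ t ∈ Icc (0:ℝ) (9/8),
      Real.sqrt ((gradU18 (gamma3 t)).1 ^ 2 + (gradU18 (gamma3 t)).2 ^ 2) = 4/3) := by
  refine ⟨?_, ?_, ?_, ?_, ?_, ?_, ?_, ?_, ?_, ?_, ?_⟩
  · intro t ht
    obtain ⟨h0, h1⟩ := ht
    have hs : 0 ≤ 1 - (8/9) * t := by nlinarith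
    rw [grad_g1 t hs]
    unfold gamma1
    have := (HasDerivAt.prodMk (aux_d1 t) (hasDerivAt_const t (0:ℝ))).hasDerivWithinAt
      (s := Ico (0:ℝ) (9/8))
    simpa using this
  · intro t ht
    have hs : 0 ≤ 1 + (8/9) * t := by nlinarith [mem_Ici.mp ht]
    rw [grad_g2 t hs]
    unfold gamma2
    have := (HasDerivAt.prodMk (hasDerivAt_const t (0:ℝ)) (aux_d2 t)).hasDerivWithinAt
      (s := Ici (0:ℝ))
    simpa using this
  · intro t ht
    obtain ⟨h0, h1⟩ := ht
    have hs : 0 ≤ 1 - (8/9) * t := by nlinarith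
    have hr : 0 ≤ (8/9) * t := by nlinarith
    rw [grad_g3 t hs hr]
    unfold gamma3
    have := (HasDerivAt.prodMk (aux_d1 t) (aux_d3 t)).hasDerivWithinAt
      (s := Icc (0:ℝ) (9/8))
    simpa using this
  · intro t ht
    obtain ⟨h0, h1⟩ := ht
    have hs : 0 ≤ 1 - (8/9) * t := by nlinarith
    rw [grad_g1 t hs]
    simp only
    rw [mul_pow, aux_sq18 _ hs,
      show ((4:ℝ)/3)^2 * (1 - 8/9 * t) + (0:ℝ)^2 = (4/3)^2 * (1 - 8/9 * t) by ring,
      Real.sqrt_mul (by positivity), Real.sqrt_sq (by norm_num)]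
  · intro a ha b hb hab
    have h1 : 0 ≤ 1 - (8/9) * b := by nlinarith [hb.2]
    have h : Real.sqrt (1 - 8/9 * b) < Real.sqrt (1 - 8/9 * a) :=
      Real.sqrt_lt_sqrt h1 (by nlinarith)
    simp only
    nlinarith [Real.sqrt_nonneg (1 - 8/9 * b)]
  · intro t ht
    have hs : 0 ≤ 1 + (8/9) * t := by nlinarith [mem_Ici.mp ht]
    rw [grad_g2 t hs]
    simp only
    rw [neg_sq, mul_pow, aux_sq18 _ hs,
      show (0:ℝ)^2 + ((4:ℝ)/3)^2 * (1 + 8/9 * t) = (4/3)^2 * (1 + 8/9 * t) by ring,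
      Real.sqrt_mul (by positivity), Real.sqrt_sq (by norm_num)]
  · intro a ha b hb hab
    have h1 : 0 ≤ 1 + (8/9) * a := by nlinarith [mem_Ici.mp ha]
    have h : Real.sqrt (1 + 8/9 * a) < Real.sqrt (1 + 8/9 * b) :=
      Real.sqrt_lt_sqrt h1 (by nlinarith)
    simp only
    nlinarith [Real.sqrt_nonneg (1 + 8/9 * a)]
  · unfold gamma1
    rw [show (1:ℝ) - 8/9 * 0 = 1 by ring, Real.one_rpow]
  · unfold gamma3
    rw [show (1:ℝ) - 8/9 * 0 = 1 by ring, show (8:ℝ)/9 * 0 = 0 by ring,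
      Real.one_rpow, Real.zero_rpow (by norm_num)]
  · refine ⟨9/8, ⟨by norm_num, le_rfl⟩, ?_⟩
    unfold gamma1 gamma3
    rw [show (1:ℝ) - 8/9 * (9/8) = 0 by ring, show (8:ℝ)/9 * (9/8) = 1 by ring,
      Real.one_rpow]
    intro h
    have := congrArg Prod.snd h
    norm_num at this
  · intro t ht
    obtain ⟨h0, h1⟩ := ht
    have hs : 0 ≤ 1 - (8/9) * t := by nlinarith
    have hr : 0 ≤ (8/9) * t := by nlinarith
    rw [grad_g3 t hs hr]
    simp only
    rw [neg_sq, mul_pow, mul_pow, aux_sq18 _ hs, aux_sq18 _ hr,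
      show ((4:ℝ)/3)^2 * (1 - 8/9 * t) + ((4:ℝ)/3)^2 * (8/9 * t) = (4/3)^2 by ring,
      Real.sqrt_sq (by norm_num)]
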